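/- arXiv:1702.08168 — 2 statements merged into one kernel-verified Lean document; each statement's English description precedes it below -/
import Mathlib

section
/- For every λ ∈ F and every sequence ⟨i₁,…,i_ℓ⟩ ∈ Seq₂(m,n) (with ℓ = m+n), one has Σ_{j: i_j=1} 𝓛₁(λ+σ_j+α/2) = Σ_{j: i_j=2} 𝓛₂(λ+σ_j+β/2); equivalently, Σ_{j=1}^{ℓ} 𝓛_{i_j}(λ+σ_j+α_{i_j}/2) = 2·ord(𝐢,λ). -/
open Complex

noncomputable section
open scoped Classical

/-- The face lattice `F = ℤα + ℤβ ⊆ ℝ`. -/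
def latF (α β : ℝ) : Set ℝ := {u | ∃ x y : ℤ, u = x * α + y * β}

/-- The vertex lattice `V = F + (α+β)/2`. -/
def latV (α β : ℝ) : Set ℝ := {u | ∃ x y : ℤ, u = x * α + y * β + (α + β) / 2}

/-- The vertical edge lattice `E₁ = F + α/2`. -/
def latE1 (α β : ℝ) : Set ℝ := {u | ∃ x y : ℤ, u = x * α + y * β + α / 2}

/-- The horizontal edge lattice `E₂ = F + β/2`. -/
def latE2 (α β : ℝ) : Set ℝ := {u | ∃ x y : ℤ, u = x * α + y * β + β / 2}

/-- An `(m,n)`-periodic higher spin vertex configuration: a pair of finitely supported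
multiplicity functions, supported on `E₁` resp. `E₂`, satisfying the current
conservation rule. -/
structure Config (α β : ℝ) (ℒ₁ ℒ₂ : ℝ → ℕ) : Prop where
  supp1 : ∀ u : ℝ, ℒ₁ u ≠ 0 → u ∈ latE1 α β
  supp2 : ∀ u : ℝ, ℒ₂ u ≠ 0 → u ∈ latE2 α β
  fin1 : (Function.support ℒ₁).Finite
  fin2 : (Function.support ℒ₂).Finite
  conserv : ∀ v ∈ latV α β,
    ℒ₁ (v + β / 2) + ℒ₂ (v + α / 2) = ℒ₁ (v - β / 2) + ℒ₂ (v - α / 2)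

/-- The step `α₁ = α` (for `i = 0`, i.e. a `1`-step) or `α₂ = β` (for `i = 1`). -/
def stepOf (α β : ℝ) (i : Fin 2) : ℝ := if i = 0 then α else β

/-- `σ_j = α_{i₁} + ⋯ + α_{i_{j-1}}`, the partial sum of the first `j` steps. -/
def sigmaL (α β : ℝ) (l : List (Fin 2)) (j : ℕ) : ℝ :=
  ((l.take j).map (stepOf α β)).sum

/-- `ord(𝐢,λ) = Σ_{j : i_j = 1} 𝓛₁(λ + σ_j + α/2)`. -/
def ordL (α β : ℝ) (ℒ₁ : ℝ → ℕ) (l : List (Fin 2)) (lam : ℝ) : ℕ :=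
  ∑ j ∈ Finset.range l.length,
    if l.getD j 0 = 0 then ℒ₁ (lam + sigmaL α β l j + α / 2) else 0

def fsteps (α β : ℝ) (l : List (Fin 2)) : ℝ := (l.map (stepOf α β)).sum

def fint (α β : ℝ) (ℒ₁ ℒ₂ : ℝ → ℕ) : List (Fin 2) → ℝ → ℤ
  | [], _ => 0
  | i :: t, x => (if i = 0 then (ℒ₁ (x + α / 2) : ℤ) else -(ℒ₂ (x + β / 2) : ℤ))
      + fint α β ℒ₁ ℒ₂ t (x + stepOf α β i)

lemma latF_add_step {α β : ℝ} {x : ℝ} (hx : x ∈ latF α β) (i : Fin 2) :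
    x + stepOf α β i ∈ latF α β := by
  obtain ⟨a, b, rfl⟩ := hx
  fin_cases i
  · exact ⟨a + 1, b, by push_cast [stepOf]; ring⟩
  · exact ⟨a, b + 1, by push_cast [stepOf]; ring⟩

lemma fint_append (α β : ℝ) (ℒ₁ ℒ₂ : ℝ → ℕ) (l₁ l₂ : List (Fin 2)) (x : ℝ) :
    fint α β ℒ₁ ℒ₂ (l₁ ++ l₂) x
      = fint α β ℒ₁ ℒ₂ l₁ x + fint α β ℒ₁ ℒ₂ l₂ (x + fsteps α β l₁) := by
  induction l₁ generalizing x with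
  | nil => simp [fint, fsteps]
  | cons a t ih =>
      simp only [List.cons_append, fint, fsteps, List.map_cons, List.sum_cons]
      rw [ih]
      simp only [fsteps]
      ring

lemma fint_perm {α β : ℝ} {ℒ₁ ℒ₂ : ℝ → ℕ} (hconf : Config α β ℒ₁ ℒ₂)
    {l₁ l₂ : List (Fin 2)} (h : l₁.Perm l₂) :
    ∀ x ∈ latF α β, fint α β ℒ₁ ℒ₂ l₁ x = fint α β ℒ₁ ℒ₂ l₂ x := by
  induction h with
  | nil => intro x _; rfl
  | cons a h ih =>
      intro x hx
      simp only [fint]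
      rw [ih _ (latF_add_step hx a)]
  | swap a b t =>
      intro x hx
      obtain ⟨p, q, rfl⟩ := hx
      have hcons := hconf.conserv ((p:ℝ)*α + (q:ℝ)*β + (α+β)/2) ⟨p, q, rfl⟩
      have hc : (ℒ₁ ((p:ℝ)*α + (q:ℝ)*β + (α+β)/2 + β/2) : ℤ)
            + (ℒ₂ ((p:ℝ)*α + (q:ℝ)*β + (α+β)/2 + α/2) : ℤ)
          = (ℒ₁ ((p:ℝ)*α + (q:ℝ)*β + (α+β)/2 - β/2) : ℤ)
            + (ℒ₂ ((p:ℝ)*α + (q:ℝ)*β + (α+β)/2 - α/2) : ℤ) := by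
        exact_mod_cast hcons
      simp only [fint]
      have htail : fint α β ℒ₁ ℒ₂ t ((p:ℝ)*α+(q:ℝ)*β + stepOf α β b + stepOf α β a)
          = fint α β ℒ₁ ℒ₂ t ((p:ℝ)*α+(q:ℝ)*β + stepOf α β a + stepOf α β b) := by
        congr 1; ring
      rw [htail]
      ring_nf at hc
      have ftwo : ∀ i : Fin 2, i = 0 ∨ i = 1 := by decide
      rcases ftwo a with rfl | rfl <;> rcases ftwo b with rfl | rfl <;>
        simp only [stepOf] <;> norm_num <;> ring_nf <;> omega
  | trans h₁ h₂ ih₁ ih₂ =>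
      intro x hx
      rw [ih₁ x hx, ih₂ x hx]

lemma fsteps_eq (α β : ℝ) (l : List (Fin 2)) :
    fsteps α β l = (l.count 0 : ℝ) * α + (l.count 1 : ℝ) * β := by
  induction l with
  | nil => simp [fsteps]
  | cons a t ih =>
      have ftwo : ∀ i : Fin 2, i = 0 ∨ i = 1 := by decide
      have h1 : fsteps α β (a :: t) = stepOf α β a + fsteps α β t := by
        simp [fsteps]
      rcases ftwo a with rfl | rfl <;>
        rw [h1, ih] <;> simp [stepOf, List.count_cons] <;> push_cast <;> ring

lemma fint_shift {α β : ℝ} {ℒ₁ ℒ₂ : ℝ → ℕ} (hconf : Config α β ℒ₁ ℒ₂)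
    {l : List (Fin 2)} (hs : fsteps α β l = 0) {i : Fin 2} (hi : i ∈ l)
    {x : ℝ} (hx : x ∈ latF α β) :
    fint α β ℒ₁ ℒ₂ l (x + stepOf α β i) = fint α β ℒ₁ ℒ₂ l x := by
  obtain htp := List.perm_cons_erase hi
  set t := l.erase i with ht
  have hperm2 : l.Perm (t ++ [i]) := htp.trans (List.perm_append_comm (l₁ := [i]) (l₂ := t))
  have hft : fsteps α β t = -stepOf α β i := by
    have hse := (htp.map (stepOf α β)).sum_eq
    have : fsteps α β l = stepOf α β i + fsteps α β t := by
      simpa [fsteps] using hse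
    linarith [hs, this]
  have h1 : fint α β ℒ₁ ℒ₂ l (x + stepOf α β i)
      = fint α β ℒ₁ ℒ₂ t (x + stepOf α β i)
        + fint α β ℒ₁ ℒ₂ [i] (x + stepOf α β i + fsteps α β t) := by
    rw [fint_perm hconf hperm2 _ (latF_add_step hx i), fint_append]
  have harg : x + stepOf α β i + fsteps α β t = x := by rw [hft]; ring
  rw [harg] at h1
  have h2 : fint α β ℒ₁ ℒ₂ l x
      = fint α β ℒ₁ ℒ₂ [i] x + fint α β ℒ₁ ℒ₂ t (x + stepOf α β i) := by
    rw [fint_perm hconf htp _ hx]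
    simp [fint]
  rw [h1, h2]; ring

lemma fint_latF {α β : ℝ} {ℒ₁ ℒ₂ : ℝ → ℕ} (hconf : Config α β ℒ₁ ℒ₂)
    {l : List (Fin 2)} (hs : fsteps α β l = 0)
    (h0 : (0 : Fin 2) ∈ l) (h1 : (1 : Fin 2) ∈ l) :
    ∀ x ∈ latF α β, fint α β ℒ₁ ℒ₂ l x = fint α β ℒ₁ ℒ₂ l 0 := by
  have s0 : stepOf α β 0 = α := by simp [stepOf]
  have s1 : stepOf α β 1 = β := by norm_num [stepOf]
  have keyα : ∀ x ∈ latF α β, fint α β ℒ₁ ℒ₂ l (x + α) = fint α β ℒ₁ ℒ₂ l x := by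
    intro x hx; rw [← s0]; exact fint_shift hconf hs h0 hx
  have keyβ : ∀ x ∈ latF α β, fint α β ℒ₁ ℒ₂ l (x + β) = fint α β ℒ₁ ℒ₂ l x := by
    intro x hx; rw [← s1]; exact fint_shift hconf hs h1 hx
  have hb : ∀ q : ℤ, fint α β ℒ₁ ℒ₂ l ((q : ℝ) * β) = fint α β ℒ₁ ℒ₂ l 0 := by
    intro q
    induction q using Int.induction_on with
    | zero => norm_num
    | succ k ih =>
        have harg : ((k + 1 : ℤ) : ℝ) * β = (k : ℝ) * β + β := by push_cast; ring
        rw [harg, keyβ _ ⟨0, k, by push_cast; ring⟩]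
        exact_mod_cast ih
    | pred k ih =>
        have hk := keyβ ((-(k : ℝ) - 1) * β) ⟨0, -k - 1, by push_cast; ring⟩
        have harg : (-(k : ℝ) - 1) * β + β = ((-k : ℤ) : ℝ) * β := by push_cast; ring
        have harg2 : (-(k : ℝ) - 1) * β = ((-(k : ℤ) - 1 : ℤ) : ℝ) * β := by push_cast; ring
        rw [harg, harg2] at hk
        rw [← hk]
        exact_mod_cast ih
  intro x hx
  obtain ⟨p, q, rfl⟩ := hx
  induction p using Int.induction_on with
  | zero => simpa using hb q
  | succ k ih =>
      have harg : ((k + 1 : ℤ) : ℝ) * α + (q : ℝ) * β = ((k : ℝ) * α + (q : ℝ) * β) + α := by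
        push_cast; ring
      rw [harg, keyα _ ⟨k, q, by push_cast; ring⟩]
      exact ih
  | pred k ih =>
      have hk := keyα ((-(k : ℝ) - 1) * α + (q : ℝ) * β) ⟨-k - 1, q, by push_cast; ring⟩
      have harg : (-(k : ℝ) - 1) * α + (q : ℝ) * β + α = ((-k : ℤ) : ℝ) * α + (q : ℝ) * β := by
        push_cast; ring
      have harg2 : (-(k : ℝ) - 1) * α + (q : ℝ) * β
          = ((-(k : ℤ) - 1 : ℤ) : ℝ) * α + (q : ℝ) * β := by push_cast; ring
      rw [harg, harg2] at hk
      rw [← hk]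
      exact ih

def gsum (α β : ℝ) (e : Fin 2 → ℝ → ℕ) : List (Fin 2) → ℝ → ℕ
  | [], _ => 0
  | i :: t, x => e i x + gsum α β e t (x + stepOf α β i)

lemma fint_eq_gsum (α β : ℝ) (ℒ₁ ℒ₂ : ℝ → ℕ) (l : List (Fin 2)) (x : ℝ) :
    fint α β ℒ₁ ℒ₂ l x
      = (gsum α β (fun i x => if i = 0 then ℒ₁ (x + α / 2) else 0) l x : ℤ)
        - (gsum α β (fun i x => if i = 0 then 0 else ℒ₂ (x + β / 2)) l x : ℤ) := by
  induction l generalizing x with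
  | nil => simp [fint, gsum]
  | cons a t ih =>
      have ftwo : ∀ i : Fin 2, i = 0 ∨ i = 1 := by decide
      rcases ftwo a with rfl | rfl <;>
        simp only [fint, gsum, ih] <;> norm_num <;> push_cast <;> ring

lemma sum_trans_le {ℒ : ℝ → ℕ} (hfin : (Function.support ℒ).Finite) {β : ℝ}
    (hβ : β ≠ 0) (x : ℝ) (N : ℕ) :
    ∑ k ∈ Finset.range N, ℒ (x + (k : ℝ) * β) ≤ ∑ u ∈ hfin.toFinset, ℒ u := by
  have hinj : ∀ a ∈ Finset.range N, ∀ b ∈ Finset.range N,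
      x + (a : ℝ) * β = x + (b : ℝ) * β → a = b := by
    intro a _ b _ h
    have : (a : ℝ) = b := mul_right_cancel₀ hβ (by linarith)
    exact_mod_cast this
  rw [← Finset.sum_image (g := fun k : ℕ => x + (k : ℝ) * β) (f := ℒ) hinj]
  set I := (Finset.range N).image (fun k : ℕ => x + (k : ℝ) * β) with hI
  set T := hfin.toFinset with hT
  have step1 : ∑ u ∈ I, ℒ u = ∑ u ∈ I ∩ T, ℒ u := by
    refine (Finset.sum_subset Finset.inter_subset_left ?_).symm
    intro u hu hnu
    by_contra hne
    exact hnu (Finset.mem_inter.mpr ⟨hu, hfin.mem_toFinset.mpr hne⟩)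
  rw [step1]
  exact Finset.sum_le_sum_of_subset Finset.inter_subset_right

lemma gsum_trans_le (α β : ℝ) (e : Fin 2 → ℝ → ℕ) (S : ℕ)
    (he : ∀ (i : Fin 2) (x : ℝ) (N : ℕ), ∑ k ∈ Finset.range N, e i (x + (k : ℝ) * β) ≤ S)
    (l : List (Fin 2)) (N : ℕ) :
    ∀ x : ℝ, ∑ k ∈ Finset.range N, gsum α β e l (x + (k : ℝ) * β) ≤ l.length * S := by
  induction l with
  | nil => intro x; simp [gsum]
  | cons a t ih =>
      intro x
      have hsplit : ∑ k ∈ Finset.range N, gsum α β e (a :: t) (x + (k : ℝ) * β)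
          = (∑ k ∈ Finset.range N, e a (x + (k : ℝ) * β))
            + ∑ k ∈ Finset.range N, gsum α β e t ((x + stepOf α β a) + (k : ℝ) * β) := by
        rw [← Finset.sum_add_distrib]
        refine Finset.sum_congr rfl fun k _ => ?_
        simp only [gsum]
        congr 2
        ring
      rw [hsplit]
      calc (∑ k ∈ Finset.range N, e a (x + (k : ℝ) * β))
            + ∑ k ∈ Finset.range N, gsum α β e t ((x + stepOf α β a) + (k : ℝ) * β)
          ≤ S + t.length * S := Nat.add_le_add (he a x N) (ih (x + stepOf α β a))
        _ = (a :: t).length * S := by simp [List.length_cons]; ring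

lemma fint_zero {α β : ℝ} {ℒ₁ ℒ₂ : ℝ → ℕ} (hconf : Config α β ℒ₁ ℒ₂)
    {l : List (Fin 2)} (hs : fsteps α β l = 0)
    (h0 : (0 : Fin 2) ∈ l) (h1 : (1 : Fin 2) ∈ l) (hβ : β ≠ 0) :
    ∀ x ∈ latF α β, fint α β ℒ₁ ℒ₂ l x = 0 := by
  have ftwo : ∀ i : Fin 2, i = 0 ∨ i = 1 := by decide
  suffices hz : fint α β ℒ₁ ℒ₂ l 0 = 0 by
    intro x hx; rw [fint_latF hconf hs h0 h1 x hx, hz]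
  set c := fint α β ℒ₁ ℒ₂ l 0 with hc
  set e₁ := fun (i : Fin 2) (x : ℝ) => if i = 0 then ℒ₁ (x + α / 2) else 0 with he₁def
  set e₂ := fun (i : Fin 2) (x : ℝ) => if i = 0 then 0 else ℒ₂ (x + β / 2) with he₂def
  set S₁ := ∑ u ∈ hconf.fin1.toFinset, ℒ₁ u with hS₁
  set S₂ := ∑ u ∈ hconf.fin2.toFinset, ℒ₂ u with hS₂
  have hbe₁ : ∀ (i : Fin 2) (x : ℝ) (N : ℕ),
      ∑ k ∈ Finset.range N, e₁ i (x + (k : ℝ) * β) ≤ S₁ := by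
    intro i x N
    rcases ftwo i with rfl | rfl
    · have : ∑ k ∈ Finset.range N, e₁ 0 (x + (k : ℝ) * β)
          = ∑ k ∈ Finset.range N, ℒ₁ ((x + α / 2) + (k : ℝ) * β) := by
        refine Finset.sum_congr rfl fun k _ => ?_
        simp only [he₁def, if_pos rfl]
        congr 1; ring
      rw [this]
      exact sum_trans_le hconf.fin1 hβ _ N
    · simp [he₁def]
  have hbe₂ : ∀ (i : Fin 2) (x : ℝ) (N : ℕ),
      ∑ k ∈ Finset.range N, e₂ i (x + (k : ℝ) * β) ≤ S₂ := by
    intro i x N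
    rcases ftwo i with rfl | rfl
    · simp [he₂def]
    · have : ∑ k ∈ Finset.range N, e₂ 1 (x + (k : ℝ) * β)
          = ∑ k ∈ Finset.range N, ℒ₂ ((x + β / 2) + (k : ℝ) * β) := by
        refine Finset.sum_congr rfl fun k _ => ?_
        simp only [he₂def]
        norm_num
        congr 1; ring
      rw [this]
      exact sum_trans_le hconf.fin2 hβ _ N
  have key : ∀ N : ℕ, (N : ℤ) * c ≤ (l.length * S₁ : ℕ)
      ∧ (N : ℤ) * (-c) ≤ (l.length * S₂ : ℕ) := by
    intro N
    have hsum : ∑ k ∈ Finset.range N, fint α β ℒ₁ ℒ₂ l ((k : ℝ) * β) = (N : ℤ) * c := by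
      have hcongr : ∑ k ∈ Finset.range N, fint α β ℒ₁ ℒ₂ l ((k : ℝ) * β)
          = ∑ _k ∈ Finset.range N, c :=
        Finset.sum_congr rfl fun k _ =>
          fint_latF hconf hs h0 h1 ((k : ℝ) * β) ⟨0, (k : ℤ), by push_cast; ring⟩
      rw [hcongr]
      simp [mul_comm]
    have hg : ∑ k ∈ Finset.range N, fint α β ℒ₁ ℒ₂ l ((k : ℝ) * β)
        = ((∑ k ∈ Finset.range N, gsum α β e₁ l ((0 : ℝ) + (k : ℝ) * β) : ℕ) : ℤ)
          - ((∑ k ∈ Finset.range N, gsum α β e₂ l ((0 : ℝ) + (k : ℝ) * β) : ℕ) : ℤ) := by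
      push_cast
      rw [← Finset.sum_sub_distrib]
      refine Finset.sum_congr rfl fun k _ => ?_
      rw [zero_add]
      exact fint_eq_gsum α β ℒ₁ ℒ₂ l _
    have hb1 : (∑ k ∈ Finset.range N, gsum α β e₁ l ((0 : ℝ) + (k : ℝ) * β)) ≤ l.length * S₁ :=
      gsum_trans_le α β e₁ S₁ hbe₁ l N 0
    have hb2 : (∑ k ∈ Finset.range N, gsum α β e₂ l ((0 : ℝ) + (k : ℝ) * β)) ≤ l.length * S₂ :=
      gsum_trans_le α β e₂ S₂ hbe₂ l N 0
    constructor
    · rw [← hsum, hg]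
      have := Int.ofNat_le.mpr hb1
      omega
    · rw [show (N : ℤ) * (-c) = -((N:ℤ) * c) from by ring, ← hsum, hg]
      have := Int.ofNat_le.mpr hb2
      omega
  rcases lt_trichotomy c 0 with hlt | heq | hgt
  · exfalso
    have := (key (l.length * S₂ + 1)).2
    have hN : ((l.length * S₂ + 1 : ℕ) : ℤ) = (l.length * S₂ : ℕ) + 1 := by push_cast; ring
    nlinarith [this, hN]
  · exact heq
  · exfalso
    have := (key (l.length * S₁ + 1)).1
    have hN : ((l.length * S₁ + 1 : ℕ) : ℤ) = (l.length * S₁ : ℕ) + 1 := by push_cast; ring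
    nlinarith [this, hN]

lemma sigmaL_zero (α β : ℝ) (l : List (Fin 2)) : sigmaL α β l 0 = 0 := by simp [sigmaL]

lemma sigmaL_cons_succ (α β : ℝ) (a : Fin 2) (t : List (Fin 2)) (j : ℕ) :
    sigmaL α β (a :: t) (j + 1) = stepOf α β a + sigmaL α β t j := by
  simp [sigmaL, List.take_succ_cons]

lemma fint_eq_rangeSum (α β : ℝ) (ℒ₁ ℒ₂ : ℝ → ℕ) (l : List (Fin 2)) (x : ℝ) :
    fint α β ℒ₁ ℒ₂ l x
      = ∑ j ∈ Finset.range l.length,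
          (if l.getD j 0 = 0 then (ℒ₁ (x + sigmaL α β l j + α / 2) : ℤ)
           else -(ℒ₂ (x + sigmaL α β l j + β / 2) : ℤ)) := by
  induction l generalizing x with
  | nil => simp [fint]
  | cons a t ih =>
      rw [List.length_cons, Finset.sum_range_succ']
      simp only [List.getD_cons_succ, List.getD_cons_zero, sigmaL_cons_succ, sigmaL_zero]
      have hshift : (∑ j ∈ Finset.range t.length,
            (if t.getD j 0 = 0 then (ℒ₁ (x + (stepOf α β a + sigmaL α β t j) + α / 2) : ℤ)
             else -(ℒ₂ (x + (stepOf α β a + sigmaL α β t j) + β / 2) : ℤ)))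
          = fint α β ℒ₁ ℒ₂ t (x + stepOf α β a) := by
        rw [ih]
        refine Finset.sum_congr rfl fun j _ => ?_
        split_ifs <;> [congr 2; congr 3] <;> ring
      rw [hshift]
      have hhead : fint α β ℒ₁ ℒ₂ (a :: t) x
          = (if a = 0 then (ℒ₁ (x + α / 2) : ℤ) else -(ℒ₂ (x + β / 2) : ℤ))
            + fint α β ℒ₁ ℒ₂ t (x + stepOf α β a) := rfl
      rw [hhead]
      have hterm : (if a = 0 then (ℒ₁ (x + 0 + α / 2) : ℤ) else -(ℒ₂ (x + 0 + β / 2) : ℤ))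
          = (if a = 0 then (ℒ₁ (x + α / 2) : ℤ) else -(ℒ₂ (x + β / 2) : ℤ)) := by
        split_ifs <;> [congr 2; congr 3] <;> ring
      rw [hterm]
      ring

lemma vanish_of_per {ℒ : ℝ → ℕ} (hfin : (Function.support ℒ).Finite) {γ : ℝ}
    (hγ : γ ≠ 0) {lam : ℝ} (hper : ∀ k : ℤ, ℒ (lam + (k : ℝ) * γ) = ℒ lam) :
    ℒ lam = 0 := by
  by_contra hne
  have hsub : Set.range (fun k : ℤ => lam + (k : ℝ) * γ) ⊆ Function.support ℒ := by
    rintro u ⟨k, rfl⟩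
    simp only [Function.mem_support, hper k]
    exact hne
  have hinj : Function.Injective (fun k : ℤ => lam + (k : ℝ) * γ) := by
    intro a b h
    simp only [add_right_inj] at h
    have : (a : ℝ) = b := mul_right_cancel₀ hγ h
    exact_mod_cast this
  exact (Set.infinite_range_of_injective hinj) (hfin.subset hsub)

lemma per_int {ℒ : ℝ → ℕ} {α β γ : ℝ} (hγ : γ = α ∨ γ = β)
    (hstep : ∀ x ∈ latF α β, ℒ (x + γ) = ℒ x) {lam : ℝ} (hlam : lam ∈ latF α β) :
    ∀ k : ℤ, ℒ (lam + (k : ℝ) * γ) = ℒ lam := by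
  have hmem : ∀ k : ℤ, lam + (k : ℝ) * γ ∈ latF α β := by
    obtain ⟨p, q, rfl⟩ := hlam
    intro k
    rcases hγ with rfl | rfl
    · exact ⟨p + k, q, by push_cast; ring⟩
    · exact ⟨p, q + k, by push_cast; ring⟩
  intro k
  induction k using Int.induction_on with
  | zero => norm_num
  | succ k ih =>
      rw [show lam + ((k + 1 : ℤ) : ℝ) * γ = lam + ((k : ℤ) : ℝ) * γ + γ by push_cast; ring,
        hstep _ (hmem k), ih]
  | pred k ih =>
      have h := hstep _ (hmem (-k - 1))
      rw [show lam + ((-k - 1 : ℤ) : ℝ) * γ + γ = lam + ((-k : ℤ) : ℝ) * γ by push_cast; ring]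
        at h
      rw [show lam + ((-(k : ℤ) - 1 : ℤ) : ℝ) * γ = lam + ((-k - 1 : ℤ) : ℝ) * γ by push_cast; ring,
        ← h]
      exact ih

lemma length_count (l : List (Fin 2)) : l.length = l.count 0 + l.count 1 := by
  induction l with
  | nil => simp
  | cons a t ih =>
      have ftwo : ∀ i : Fin 2, i = 0 ∨ i = 1 := by decide
      rcases ftwo a with rfl | rfl <;> simp [List.count_cons, ih] <;> omega
/-- For every `λ ∈ F` and every sequence `𝐢 ∈ Seq₂(m,n)`:
`Σ_{j : i_j = 1} 𝓛₁(λ+σ_j+α/2) = Σ_{j : i_j = 2} 𝓛₂(λ+σ_j+β/2)`; equivalently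
`Σ_j 𝓛_{i_j}(λ+σ_j+α_{i_j}/2) = 2·ord(𝐢,λ)`. -/
theorem stmt15 (m n : ℕ) (hmn : Nat.Coprime m n) (α β : ℝ)
    (hαβ : (α, β) ≠ ((0 : ℝ), (0 : ℝ))) (hlin : (m : ℝ) * α + (n : ℝ) * β = 0)
    (ℒ₁ ℒ₂ : ℝ → ℕ) (hconf : Config α β ℒ₁ ℒ₂)
    (l : List (Fin 2)) (hl0 : l.count 0 = m) (hl1 : l.count 1 = n) :
    ∀ lam ∈ latF α β,
      ((∑ j ∈ Finset.range l.length,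
          if l.getD j 0 = 0 then ℒ₁ (lam + sigmaL α β l j + α / 2) else 0) =
        ∑ j ∈ Finset.range l.length,
          if l.getD j 0 = 1 then ℒ₂ (lam + sigmaL α β l j + β / 2) else 0) ∧
      ((∑ j ∈ Finset.range l.length,
          if l.getD j 0 = 0 then ℒ₁ (lam + sigmaL α β l j + α / 2)
          else ℒ₂ (lam + sigmaL α β l j + β / 2)) =
        2 * ordL α β ℒ₁ l lam) := by
  intro lam hlam
  have ftwo : ∀ i : Fin 2, i = 0 ∨ i = 1 := by decide
  rcases Nat.eq_zero_or_pos m with hm0 | hm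
  · -- m = 0, n = 1, β = 0, l = [1]
    subst hm0
    have hn1 : n = 1 := by simpa [Nat.coprime_zero_left] using hmn
    subst hn1
    have hβ0 : β = 0 := by
      have h := hlin
      push_cast at h
      linarith
    subst hβ0
    have hα : α ≠ 0 := fun h => hαβ (by simp [h])
    have hlen : l.length = 1 := by rw [length_count, hl0, hl1]
    obtain ⟨a, rfl⟩ := List.length_eq_one_iff.mp hlen
    have ha : a = 1 := by
      rcases ftwo a with rfl | rfl
      · simp at hl1
      · rfl
    subst ha
    have hstep : ∀ x ∈ latF α 0, ℒ₂ (x + α) = ℒ₂ x := by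
      rintro x ⟨p, q, rfl⟩
      have h := hconf.conserv ((p : ℝ) * α + (q : ℝ) * 0 + (α + 0) / 2) ⟨p, q, rfl⟩
      norm_num at h ⊢
      ring_nf at h ⊢
      omega
    have hvan : ℒ₂ lam = 0 :=
      vanish_of_per hconf.fin2 hα (per_int (Or.inl rfl) hstep hlam)
    constructor
    · simp [Finset.sum_range_one, sigmaL, hvan]
    · simp [Finset.sum_range_one, sigmaL, ordL, hvan]
  rcases Nat.eq_zero_or_pos n with hn0 | hn
  · -- n = 0, m = 1, α = 0, l = [0]
    subst hn0
    have hm1 : m = 1 := by simpa [Nat.coprime_zero_right] using hmn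
    subst hm1
    have hα0 : α = 0 := by
      have h := hlin
      push_cast at h
      linarith
    subst hα0
    have hβ : β ≠ 0 := fun h => hαβ (by simp [h])
    have hlen : l.length = 1 := by rw [length_count, hl0, hl1]
    obtain ⟨a, rfl⟩ := List.length_eq_one_iff.mp hlen
    have ha : a = 0 := by
      rcases ftwo a with rfl | rfl
      · rfl
      · simp at hl0
    subst ha
    have hstep : ∀ x ∈ latF 0 β, ℒ₁ (x + β) = ℒ₁ x := by
      rintro x ⟨p, q, rfl⟩
      have h := hconf.conserv ((p : ℝ) * 0 + (q : ℝ) * β + (0 + β) / 2) ⟨p, q, rfl⟩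
      norm_num at h ⊢
      ring_nf at h ⊢
      omega
    have hvan : ℒ₁ lam = 0 :=
      vanish_of_per hconf.fin1 hβ (per_int (Or.inr rfl) hstep hlam)
    constructor
    · simp [Finset.sum_range_one, sigmaL, hvan]
    · simp [Finset.sum_range_one, sigmaL, ordL, hvan]
  -- main case: m ≥ 1 and n ≥ 1
  have hmr : (m : ℝ) ≠ 0 := Nat.cast_ne_zero.mpr (by omega)
  have hnr : (n : ℝ) ≠ 0 := Nat.cast_ne_zero.mpr (by omega)
  have hβ : β ≠ 0 := by
    intro h
    have hα0 : α = 0 := by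
      have : (m : ℝ) * α = 0 := by rw [h] at hlin; linarith
      exact (mul_eq_zero.mp this).resolve_left hmr
    exact hαβ (by simp [h, hα0])
  have h0 : (0 : Fin 2) ∈ l := by
    by_contra h
    rw [List.count_eq_zero_of_not_mem h] at hl0
    omega
  have h1 : (1 : Fin 2) ∈ l := by
    by_contra h
    rw [List.count_eq_zero_of_not_mem h] at hl1
    omega
  have hs : fsteps α β l = 0 := by rw [fsteps_eq, hl0, hl1]; exact hlin
  have hz := fint_zero hconf hs h0 h1 hβ lam hlam
  rw [fint_eq_rangeSum] at hz
  set A := ∑ j ∈ Finset.range l.length,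
      if l.getD j 0 = 0 then ℒ₁ (lam + sigmaL α β l j + α / 2) else 0 with hA
  set B := ∑ j ∈ Finset.range l.length,
      if l.getD j 0 = 1 then ℒ₂ (lam + sigmaL α β l j + β / 2) else 0 with hB
  have hAB : (∑ j ∈ Finset.range l.length,
        (if l.getD j 0 = 0 then (ℒ₁ (lam + sigmaL α β l j + α / 2) : ℤ)
         else -(ℒ₂ (lam + sigmaL α β l j + β / 2) : ℤ)))
      = (A : ℤ) - (B : ℤ) := by
    rw [hA, hB]
    push_cast
    rw [← Finset.sum_sub_distrib]
    refine Finset.sum_congr rfl fun j _ => ?_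
    rcases ftwo (l.getD j 0) with h | h <;> rw [h] <;> simp
  rw [hAB] at hz
  have hABeq : A = B := by
    have : (A : ℤ) = (B : ℤ) := by omega
    exact_mod_cast this
  refine ⟨hABeq, ?_⟩
  have hsplit : (∑ j ∈ Finset.range l.length,
        if l.getD j 0 = 0 then ℒ₁ (lam + sigmaL α β l j + α / 2)
        else ℒ₂ (lam + sigmaL α β l j + β / 2)) = A + B := by
    rw [hA, hB, ← Finset.sum_add_distrib]
    refine Finset.sum_congr rfl fun j _ => ?_
    rcases ftwo (l.getD j 0) with h | h <;> rw [h] <;> simp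
  rw [hsplit]
  have hord : ordL α β ℒ₁ l lam = A := rfl
  rw [hord]
  omega

end
end

section
/- For every sequence 𝐢 = ⟨i₁,…,i_ℓ⟩ ∈ Seq₂(m,n) (with ℓ = m+n) and every μ ∈ F, one has ∏_{j=1}^{ℓ} q_{i_j}(μ+σ_j+α_{i_j}/2) = ∏_{λ∈F} (μ−λ)^{ord(𝐢,λ)}, where the product on the right has only finitely many factors different from 1 since ord(𝐢,·) is nonzero at only finitely many λ ∈ F. -/
open Complex

noncomputable section
open scoped Classical

/-- `Pᵢ(u) = ∏_{e} (u-e)^{ℒᵢ(e)}` as a function on `ℂ` (a finite product). -/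
def PfunC (ℒ : ℝ → ℕ) (u : ℂ) : ℂ := ∏ᶠ e : ℝ, (u - (e : ℂ)) ^ ℒ e

/-- `Pᵢ(u) = ∏_{e} (u-e)^{ℒᵢ(e)}` as a real-valued function on `ℝ`. -/
def PfunR (ℒ : ℝ → ℕ) (u : ℝ) : ℝ := ∏ᶠ e : ℝ, (u - e) ^ ℒ e

/-- `lᵢ(u) = Σ_{e > u} ℒᵢ(e)`. -/
def lfun (ℒ : ℝ → ℕ) (u : ℝ) : ℕ := ∑ᶠ e : ℝ, if u < e then ℒ e else 0

/-- The square root `qᵢ(e) = 𝐢^{lᵢ(e)}·|Pᵢ(e)|^{1/2}`. -/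
def qfun (ℒ : ℝ → ℕ) (e : ℝ) : ℂ := Complex.I ^ lfun ℒ e * (Real.sqrt |PfunR ℒ e| : ℂ)

namespace Stmt17Aux

open Function

lemma exists_bound (ℒ : ℝ → ℕ) (h : (support ℒ).Finite) :
    ∃ B : ℝ, 0 ≤ B ∧ ∀ z, ℒ z ≠ 0 → |z| ≤ B := by
  obtain ⟨B0, hB0⟩ := (h.image (fun z : ℝ => |z|)).bddAbove
  refine ⟨max B0 0, le_max_right _ _, fun z hz => ?_⟩
  exact le_trans (hB0 (Set.mem_image_of_mem _ hz)) (le_max_left _ _)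

lemma conserve_all {α β : ℝ} {ℒ₁ ℒ₂ : ℝ → ℕ} (hconf : Config α β ℒ₁ ℒ₂) (v : ℝ) :
    ℒ₁ (v + β / 2) + ℒ₂ (v + α / 2) = ℒ₁ (v - β / 2) + ℒ₂ (v - α / 2) := by
  by_cases hv : v ∈ latV α β
  · exact hconf.conserv v hv
  · have h1 : ℒ₁ (v + β / 2) = 0 := by
      by_contra h
      obtain ⟨x, y, hxy⟩ := hconf.supp1 _ h
      exact hv ⟨x, y - 1, by push_cast; linarith⟩
    have h2 : ℒ₂ (v + α / 2) = 0 := by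
      by_contra h
      obtain ⟨x, y, hxy⟩ := hconf.supp2 _ h
      exact hv ⟨x - 1, y, by push_cast; linarith⟩
    have h3 : ℒ₁ (v - β / 2) = 0 := by
      by_contra h
      obtain ⟨x, y, hxy⟩ := hconf.supp1 _ h
      exact hv ⟨x, y, by push_cast; linarith⟩
    have h4 : ℒ₂ (v - α / 2) = 0 := by
      by_contra h
      obtain ⟨x, y, hxy⟩ := hconf.supp2 _ h
      exact hv ⟨x, y, by push_cast; linarith⟩
    rw [h1, h2, h3, h4]

lemma periodic_zero (ℒ : ℝ → ℕ) (hfin : (support ℒ).Finite) {c : ℝ} (hc : c ≠ 0)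
    (hper : ∀ y, ℒ (y + c) = ℒ y) : ∀ y, ℒ y = 0 := by
  intro y
  obtain ⟨B, hB0, hB⟩ := exists_bound ℒ hfin
  have hit : ∀ k : ℕ, ℒ (y + k * c) = ℒ y := by
    intro k; induction k with
    | zero => simp
    | succ k ih =>
      have h : y + ((k : ℕ) + 1 : ℕ) * c = (y + k * c) + c := by push_cast; ring
      rw [h, hper, ih]
  rcases lt_or_gt_of_ne hc with hneg | hpos
  · obtain ⟨k, hk⟩ := exists_nat_gt ((y + B) / (-c))
    have h1 : y + B < (k : ℝ) * (-c) := (div_lt_iff₀ (by linarith)).1 hk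
    have h2 : (k : ℝ) * (-c) = -((k : ℝ) * c) := by ring
    by_contra h
    have h3 := hB _ (by rw [hit k]; exact h)
    rw [abs_le] at h3
    linarith
  · obtain ⟨k, hk⟩ := exists_nat_gt ((B - y) / c)
    have h1 : B - y < (k : ℝ) * c := (div_lt_iff₀ hpos).1 hk
    by_contra h
    have h3 := hB _ (by rw [hit k]; exact h)
    rw [abs_le] at h3
    linarith

lemma L1_zero {α β : ℝ} {ℒ₁ ℒ₂ : ℝ → ℕ} (hconf : Config α β ℒ₁ ℒ₂)
    (ha : α = 0) (hb : β ≠ 0) : ∀ y, ℒ₁ y = 0 := by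
  apply periodic_zero ℒ₁ hconf.fin1 hb
  intro y
  have h := conserve_all hconf (y + β / 2)
  subst ha
  have e1 : y + β / 2 + β / 2 = y + β := by ring
  have e2 : y + β / 2 - β / 2 = y := by ring
  have e3 : y + β / 2 + 0 / 2 = y + β / 2 := by ring
  have e4 : y + β / 2 - 0 / 2 = y + β / 2 := by ring
  rw [e1, e2, e3, e4] at h
  omega

lemma L2_zero {α β : ℝ} {ℒ₁ ℒ₂ : ℝ → ℕ} (hconf : Config α β ℒ₁ ℒ₂)
    (hb : β = 0) (ha : α ≠ 0) : ∀ y, ℒ₂ y = 0 := by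
  apply periodic_zero ℒ₂ hconf.fin2 ha
  intro y
  have h := conserve_all hconf (y + α / 2)
  subst hb
  have e1 : y + α / 2 + α / 2 = y + α := by ring
  have e2 : y + α / 2 - α / 2 = y := by ring
  have e3 : y + α / 2 + 0 / 2 = y + α / 2 := by ring
  have e4 : y + α / 2 - 0 / 2 = y + α / 2 := by ring
  rw [e1, e2, e3, e4] at h
  omega




def psi (α : ℝ) (ℒ : ℝ → ℕ) (S : Finset ℝ) (x : ℝ) : ℕ :=
  ∑ e ∈ S, if ∃ r : ℕ, e = x + r * α then ℒ e else 0

lemma psi_step1 {α : ℝ} (hα : α ≠ 0) (ℒ : ℝ → ℕ) (S : Finset ℝ)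
    (hS : ∀ e, ℒ e ≠ 0 → e ∈ S) (x : ℝ) :
    psi α ℒ S x = ℒ x + psi α ℒ S (x + α) := by
  unfold psi
  have key : ∀ e ∈ S, (if ∃ r : ℕ, e = x + r * α then ℒ e else 0)
      = (if e = x then ℒ e else 0) + (if ∃ r : ℕ, e = (x + α) + r * α then ℒ e else 0) := by
    intro e _
    by_cases hex : e = x
    · subst hex
      rw [if_pos ⟨0, by simp⟩, if_pos rfl, if_neg, add_zero]
      rintro ⟨r, hr⟩
      have h1 : α * ((r : ℝ) + 1) = 0 := by
        have h2 : α * ((r : ℝ) + 1) = (e + α + r * α) - e := by ring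
        rw [h2, ← hr, sub_self]
      rcases mul_eq_zero.1 h1 with h | h
      · exact hα h
      · have := Nat.cast_nonneg (α := ℝ) r; linarith
    · have hiff : (∃ r : ℕ, e = x + r * α) ↔ (∃ r : ℕ, e = (x + α) + r * α) := by
        constructor
        · rintro ⟨r, hr⟩
          cases r with
          | zero => exact absurd (by simpa using hr) hex
          | succ r => exact ⟨r, by rw [hr]; push_cast; ring⟩
        · rintro ⟨r, hr⟩
          exact ⟨r + 1, by rw [hr]; push_cast; ring⟩
      rw [if_neg hex, if_congr hiff rfl rfl, zero_add]
  rw [Finset.sum_congr rfl key, Finset.sum_add_distrib]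
  congr 1
  rw [Finset.sum_ite_eq' S x (fun e => ℒ e)]
  by_cases hx : x ∈ S
  · rw [if_pos hx]
  · rw [if_neg hx]
    by_contra h
    exact hx (hS x (fun h0 => h h0.symm))

lemma psi_eq_zero_pos {α : ℝ} (hα : 0 < α) (ℒ : ℝ → ℕ) {S : Finset ℝ} {x : ℝ}
    (hS : ∀ e ∈ S, e < x) : psi α ℒ S x = 0 := by
  apply Finset.sum_eq_zero
  intro e he
  rw [if_neg]
  rintro ⟨r, hr⟩
  have h1 := hS e he
  have h2 : 0 ≤ (r : ℝ) * α := mul_nonneg (Nat.cast_nonneg r) hα.le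
  rw [hr] at h1
  linarith

lemma psi_eq_zero_neg {α : ℝ} (hα : α < 0) (ℒ : ℝ → ℕ) {S : Finset ℝ} {x : ℝ}
    (hS : ∀ e ∈ S, x < e) : psi α ℒ S x = 0 := by
  apply Finset.sum_eq_zero
  intro e he
  rw [if_neg]
  rintro ⟨r, hr⟩
  have h1 := hS e he
  have h2 : (r : ℝ) * α ≤ 0 := mul_nonpos_of_nonneg_of_nonpos (Nat.cast_nonneg r) hα.le
  rw [hr] at h1
  linarith

lemma psi_step2 {α β : ℝ} {ℒ₁ ℒ₂ : ℝ → ℕ} (hconf : Config α β ℒ₁ ℒ₂) (hα : α ≠ 0) (x : ℝ) :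
    psi α ℒ₁ hconf.fin1.toFinset (x + β)
      = ℒ₂ (x + (β - α) / 2) + psi α ℒ₁ hconf.fin1.toFinset x := by
  set S := hconf.fin1.toFinset with hSdef
  have hSmem : ∀ e, ℒ₁ e ≠ 0 → e ∈ S := fun e he => hconf.fin1.mem_toFinset.2 he
  have hSmem' : ∀ e ∈ S, ℒ₁ e ≠ 0 := fun e he => hconf.fin1.mem_toFinset.1 he
  set g : ℝ → ℤ := fun y => (psi α ℒ₁ S (y + β) : ℤ) - psi α ℒ₁ S y - ℒ₂ (y + (β - α) / 2)
    with hgdef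
  have gstep : ∀ y, g (y + α) = g y := by
    intro y
    have s1 : psi α ℒ₁ S y = ℒ₁ y + psi α ℒ₁ S (y + α) := psi_step1 hα ℒ₁ S hSmem y
    have s2 : psi α ℒ₁ S (y + β) = ℒ₁ (y + β) + psi α ℒ₁ S (y + β + α) :=
      psi_step1 hα ℒ₁ S hSmem (y + β)
    have hc := conserve_all hconf (y + β / 2)
    have e1 : y + β / 2 + β / 2 = y + β := by ring
    have e2 : y + β / 2 - β / 2 = y := by ring
    have e3 : y + β / 2 + α / 2 = (y + α) + (β - α) / 2 := by ring
    have e4 : y + β / 2 - α / 2 = y + (β - α) / 2 := by ring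
    rw [e1, e2, e3, e4] at hc
    have e5 : y + α + β = y + β + α := by ring
    simp only [hgdef, e5]
    omega
  have giter : ∀ (y : ℝ) (k : ℕ), g (y + k * α) = g y := by
    intro y k; induction k with
    | zero => simp
    | succ k ih =>
      have e : y + ((k : ℕ) + 1 : ℕ) * α = (y + k * α) + α := by push_cast; ring
      rw [e, gstep, ih]
  have gzero : ∀ y, g y = 0 := by
    intro y
    obtain ⟨B1, hB10, hB1⟩ := exists_bound ℒ₁ hconf.fin1
    obtain ⟨B2, hB20, hB2⟩ := exists_bound ℒ₂ hconf.fin2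
    set C : ℝ := B1 + B2 + |α| + |β| + 1 with hCdef
    have hC1 : B1 ≤ C := by
      have := abs_nonneg α; have := abs_nonneg β; linarith
    have habsa : α ≤ |α| := le_abs_self α
    have habsa' : -|α| ≤ α := neg_abs_le α
    have habsb : β ≤ |β| := le_abs_self β
    have habsb' : -|β| ≤ β := neg_abs_le β
    rcases lt_or_gt_of_ne hα with hneg | hpos
    · obtain ⟨k, hk⟩ := exists_nat_gt ((y + C) / (-α))
      have h1 : y + C < (k : ℝ) * (-α) := (div_lt_iff₀ (by linarith)).1 hk
      have h2 : (k : ℝ) * (-α) = -((k : ℝ) * α) := by ring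
      set z := y + (k : ℝ) * α with hz
      have hzC : z < -C := by rw [hz]; linarith
      have p1 : psi α ℒ₁ S z = 0 := by
        apply psi_eq_zero_neg hneg
        intro e he
        have hb := hB1 e (hSmem' e he)
        rw [abs_le] at hb
        linarith [hb.1]
      have p2 : psi α ℒ₁ S (z + β) = 0 := by
        apply psi_eq_zero_neg hneg
        intro e he
        have hb := hB1 e (hSmem' e he)
        rw [abs_le] at hb
        linarith [hb.1]
      have p3 : ℒ₂ (z + (β - α) / 2) = 0 := by
        by_contra h
        have hb := hB2 _ h
        rw [abs_le] at hb
        linarith [hb.1]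
      have := giter y k
      rw [← hz] at this
      rw [← this]
      simp only [hgdef, p1, p2, p3]
      simp
    · obtain ⟨k, hk⟩ := exists_nat_gt ((C - y) / α)
      have h1 : C - y < (k : ℝ) * α := (div_lt_iff₀ hpos).1 hk
      set z := y + (k : ℝ) * α with hz
      have hzC : C < z := by rw [hz]; linarith
      have p1 : psi α ℒ₁ S z = 0 := by
        apply psi_eq_zero_pos hpos
        intro e he
        have hb := hB1 e (hSmem' e he)
        rw [abs_le] at hb
        linarith [hb.2]
      have p2 : psi α ℒ₁ S (z + β) = 0 := by
        apply psi_eq_zero_pos hpos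
        intro e he
        have hb := hB1 e (hSmem' e he)
        rw [abs_le] at hb
        linarith [hb.2]
      have p3 : ℒ₂ (z + (β - α) / 2) = 0 := by
        by_contra h
        have hb := hB2 _ h
        rw [abs_le] at hb
        linarith [hb.2]
      have := giter y k
      rw [← hz] at this
      rw [← this]
      simp only [hgdef, p1, p2, p3]
      simp
  have := gzero x
  simp only [hgdef] at this
  omega


lemma map_sum_eq (α β : ℝ) (l : List (Fin 2)) :
    ((l.map (stepOf α β)).sum) = (l.count 0 : ℝ) * α + (l.count 1 : ℝ) * β := by
  induction l with
  | nil => simp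
  | cons i l ih =>
    rw [List.map_cons, List.sum_cons, ih, List.count_cons, List.count_cons]
    fin_cases i <;> simp [stepOf] <;> push_cast <;> ring

lemma sigmaL_zero (α β : ℝ) (l : List (Fin 2)) : sigmaL α β l 0 = 0 := by
  simp [sigmaL]

lemma sigmaL_succ (α β : ℝ) (i : Fin 2) (l : List (Fin 2)) (j : ℕ) :
    sigmaL α β (i :: l) (j + 1) = stepOf α β i + sigmaL α β l j := by
  simp [sigmaL, List.take_succ_cons]

lemma walk_telescope (α β : ℝ) (ℒ₁ ℒ₂ : ℝ → ℕ) (Φ : ℝ → ℕ)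
    (h1 : ∀ p, Φ p = ℒ₁ (p + α / 2) + Φ (p + α))
    (h2 : ∀ p, Φ (p + β) = ℒ₂ (p + β / 2) + Φ p) :
    ∀ (l : List (Fin 2)) (p : ℝ),
      Φ p + ∑ j ∈ Finset.range l.length,
          (if l.getD j 0 = 0 then 0 else ℒ₂ (p + sigmaL α β l j + β / 2))
      = Φ (p + (l.map (stepOf α β)).sum)
        + ∑ j ∈ Finset.range l.length,
          (if l.getD j 0 = 0 then ℒ₁ (p + sigmaL α β l j + α / 2) else 0) := by
  intro l
  induction l with
  | nil => intro p; simp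
  | cons i l ih =>
    intro p
    have hlen : (i :: l).length = l.length + 1 := rfl
    rw [hlen, Finset.sum_range_succ', Finset.sum_range_succ']
    have hsh2 : ∑ j ∈ Finset.range l.length,
        (if (i :: l).getD (j + 1) 0 = 0 then 0
          else ℒ₂ (p + sigmaL α β (i :: l) (j + 1) + β / 2))
        = ∑ j ∈ Finset.range l.length,
        (if l.getD j 0 = 0 then 0 else ℒ₂ ((p + stepOf α β i) + sigmaL α β l j + β / 2)) := by
      apply Finset.sum_congr rfl
      intro j _
      rw [List.getD_cons_succ, sigmaL_succ]
      congr 1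
      ring
    have hsh1 : ∑ j ∈ Finset.range l.length,
        (if (i :: l).getD (j + 1) 0 = 0
          then ℒ₁ (p + sigmaL α β (i :: l) (j + 1) + α / 2) else 0)
        = ∑ j ∈ Finset.range l.length,
        (if l.getD j 0 = 0 then ℒ₁ ((p + stepOf α β i) + sigmaL α β l j + α / 2) else 0) := by
      apply Finset.sum_congr rfl
      intro j _
      rw [List.getD_cons_succ, sigmaL_succ]
      congr 1
      ring
    rw [hsh2, hsh1]
    have ihp := ih (p + stepOf α β i)
    have hmap : (p + stepOf α β i) + (l.map (stepOf α β)).sum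
        = p + ((i :: l).map (stepOf α β)).sum := by
      rw [List.map_cons, List.sum_cons]; ring
    rw [hmap] at ihp
    have hz : p + sigmaL α β (i :: l) 0 = p := by rw [sigmaL_zero, add_zero]
    rcases (by decide : ∀ v : Fin 2, v = 0 ∨ v = 1) i with rfl | rfl
    · have hstep : stepOf α β 0 = α := by simp [stepOf]
      have h0 : ((0 : Fin 2) :: l).getD 0 0 = 0 := rfl
      rw [h0, if_pos rfl, if_pos rfl, hz]
      simp only [hstep] at ihp ⊢
      have hh := h1 p
      omega
    · have hstep : stepOf α β 1 = β := by simp [stepOf]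
      have h0 : ((1 : Fin 2) :: l).getD 0 0 = (1 : Fin 2) := rfl
      rw [h0, if_neg (by decide), if_neg (by decide), hz]
      simp only [hstep] at ihp ⊢
      have hh := h2 p
      omega

lemma fin2_cases : ∀ v : Fin 2, v = 0 ∨ v = 1 := by decide

/-- The key combinatorial identity. -/
lemma C2 {m n : ℕ} {α β : ℝ} {ℒ₁ ℒ₂ : ℝ → ℕ}
    (hαβ : (α, β) ≠ ((0 : ℝ), (0 : ℝ))) (hlin : (m : ℝ) * α + (n : ℝ) * β = 0)
    (hconf : Config α β ℒ₁ ℒ₂)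
    (l : List (Fin 2)) (hl0 : l.count 0 = m) (hl1 : l.count 1 = n) :
    ∀ x : ℝ,
      (∑ j ∈ Finset.range l.length,
        if l.getD j 0 = 0 then ℒ₁ (x + sigmaL α β l j + α / 2) else 0)
      = ∑ j ∈ Finset.range l.length,
        if l.getD j 0 = 0 then 0 else ℒ₂ (x + sigmaL α β l j + β / 2) := by
  intro x
  by_cases hA : α = 0
  · have hb : β ≠ 0 := by
      intro hb; exact hαβ (by rw [hA, hb])
    have hL1 := L1_zero hconf hA hb
    have hn0 : n = 0 := by
      have hn : (n : ℝ) * β = 0 := by rw [← hlin, hA]; ring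
      rcases mul_eq_zero.1 hn with h | h
      · exact_mod_cast h
      · exact absurd h hb
    have h1 : (1 : Fin 2) ∉ l := by
      rw [← List.count_eq_zero, hl1, hn0]
    have hall : ∀ j, j < l.length → l.getD j 0 = 0 := by
      intro j hj
      have hmem : l.getD j 0 ∈ l := by
        rw [List.getD_eq_getElem l 0 hj]
        exact List.getElem_mem hj
      rcases fin2_cases (l.getD j 0) with h | h
      · exact h
      · exact absurd (h ▸ hmem) h1
    rw [Finset.sum_eq_zero (fun j hj => by
        rw [if_pos (hall j (Finset.mem_range.1 hj)), hL1]),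
      Finset.sum_eq_zero (fun j hj => by
        rw [if_pos (hall j (Finset.mem_range.1 hj))])]
  by_cases hB : β = 0
  · have hL2 := L2_zero hconf hB hA
    have hm0 : m = 0 := by
      have hm : (m : ℝ) * α = 0 := by rw [← hlin, hB]; ring
      rcases mul_eq_zero.1 hm with h | h
      · exact_mod_cast h
      · exact absurd h hA
    have h0 : (0 : Fin 2) ∉ l := by
      rw [← List.count_eq_zero, hl0, hm0]
    have hall : ∀ j, j < l.length → l.getD j 0 ≠ 0 := by
      intro j hj
      have hmem : l.getD j 0 ∈ l := by
        rw [List.getD_eq_getElem l 0 hj]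
        exact List.getElem_mem hj
      intro h
      exact h0 (h ▸ hmem)
    rw [Finset.sum_eq_zero (fun j hj => by
        rw [if_neg (hall j (Finset.mem_range.1 hj))]),
      Finset.sum_eq_zero (fun j hj => by
        rw [if_neg (hall j (Finset.mem_range.1 hj)), hL2])]
  · -- main case
    set S := hconf.fin1.toFinset with hSdef
    have hSmem : ∀ e, ℒ₁ e ≠ 0 → e ∈ S := fun e he => hconf.fin1.mem_toFinset.2 he
    set Φ : ℝ → ℕ := fun p => psi α ℒ₁ S (p + α / 2) with hPhidef
    have h1 : ∀ p, Φ p = ℒ₁ (p + α / 2) + Φ (p + α) := by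
      intro p
      have h := psi_step1 hA ℒ₁ S hSmem (p + α / 2)
      have e1 : p + α / 2 + α = p + α + α / 2 := by ring
      rw [e1] at h
      exact h
    have h2 : ∀ p, Φ (p + β) = ℒ₂ (p + β / 2) + Φ p := by
      intro p
      have h := psi_step2 hconf hA (p + α / 2)
      have e1 : p + α / 2 + β = p + β + α / 2 := by ring
      have e2 : p + α / 2 + (β - α) / 2 = p + β / 2 := by ring
      rw [e1, e2] at h
      exact h
    have key := walk_telescope α β ℒ₁ ℒ₂ Φ h1 h2 l x
    rw [map_sum_eq, hl0, hl1, hlin, add_zero] at key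
    omega

section ShiftLemmas

variable {M : Type*}

lemma prod_shift [CommMonoid M] (F : ℝ → ℕ → M) (hF : ∀ x, F x 0 = 1)
    (ℒ : ℝ → ℕ) (S D : Finset ℝ) (hS : ∀ e, ℒ e ≠ 0 → e ∈ S)
    {c : ℝ} (hD : ∀ x, ℒ (x + c) ≠ 0 → x ∈ D) (μ : ℝ) :
    ∏ e ∈ S, F (μ + c - e) (ℒ e) = ∏ x ∈ D, F (μ - x) (ℒ (x + c)) := by
  rw [← Finset.prod_filter_of_ne (p := fun e => ℒ e ≠ 0)
      (fun e _ he => by by_contra h; rw [h, hF] at he; exact he rfl),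
    ← Finset.prod_filter_of_ne (s := D) (p := fun x => ℒ (x + c) ≠ 0)
      (fun x _ hx => by by_contra h; rw [h, hF] at hx; exact hx rfl)]
  apply Finset.prod_nbij' (fun e => e - c) (fun x => x + c)
  · intro e he
    rw [Finset.mem_filter] at he ⊢
    have h : e - c + c = e := by ring
    exact ⟨hD _ (by rw [h]; exact he.2), by rw [h]; exact he.2⟩
  · intro x hx
    rw [Finset.mem_filter] at hx ⊢
    exact ⟨hS _ hx.2, hx.2⟩
  · intro e _; ring
  · intro x _; ring
  · intro e _
    have h : e - c + c = e := by ring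
    rw [h]
    congr 1
    ring

lemma sum_shift [AddCommMonoid M] (F : ℝ → ℕ → M) (hF : ∀ x, F x 0 = 0)
    (ℒ : ℝ → ℕ) (S D : Finset ℝ) (hS : ∀ e, ℒ e ≠ 0 → e ∈ S)
    {c : ℝ} (hD : ∀ x, ℒ (x + c) ≠ 0 → x ∈ D) (μ : ℝ) :
    ∑ e ∈ S, F (μ + c - e) (ℒ e) = ∑ x ∈ D, F (μ - x) (ℒ (x + c)) := by
  rw [← Finset.sum_filter_of_ne (p := fun e => ℒ e ≠ 0)
      (fun e _ he => by by_contra h; rw [h, hF] at he; exact he rfl),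
    ← Finset.sum_filter_of_ne (s := D) (p := fun x => ℒ (x + c) ≠ 0)
      (fun x _ hx => by by_contra h; rw [h, hF] at hx; exact hx rfl)]
  apply Finset.sum_nbij' (fun e => e - c) (fun x => x + c)
  · intro e he
    rw [Finset.mem_filter] at he ⊢
    have h : e - c + c = e := by ring
    exact ⟨hD _ (by rw [h]; exact he.2), by rw [h]; exact he.2⟩
  · intro x hx
    rw [Finset.mem_filter] at hx ⊢
    exact ⟨hS _ hx.2, hx.2⟩
  · intro e _; ring
  · intro x _; ring
  · intro e _
    have h : e - c + c = e := by ring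
    rw [h]
    congr 1
    ring

end ShiftLemmas

lemma sqrt_finset_prod {ι : Type*} (s : Finset ι) (f : ι → ℝ) (h : ∀ i ∈ s, 0 ≤ f i) :
    Real.sqrt (∏ i ∈ s, f i) = ∏ i ∈ s, Real.sqrt (f i) := by
  induction s using Finset.cons_induction with
  | empty => simp
  | cons a s ha ih =>
    rw [Finset.prod_cons, Finset.prod_cons, Real.sqrt_mul (h a (Finset.mem_cons_self a s)),
      ih (fun i hi => h i (Finset.mem_cons_of_mem hi))]

lemma sqrt_pow' (x : ℝ) (hx : 0 ≤ x) (n : ℕ) : Real.sqrt (x ^ n) = Real.sqrt x ^ n := by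
  induction n with
  | zero => simp
  | succ n ih => rw [pow_succ, pow_succ, Real.sqrt_mul (pow_nonneg hx n), ih]

variable {ℒ : ℝ → ℕ} {S : Finset ℝ}

lemma pfun_eq_prod (hS : ∀ e, ℒ e ≠ 0 → e ∈ S) (u : ℝ) :
    PfunR ℒ u = ∏ e ∈ S, (u - e) ^ ℒ e := by
  apply finprod_eq_prod_of_mulSupport_subset
  intro e he
  by_contra h
  apply he
  have h0 : ℒ e = 0 := by
    by_contra h1
    exact h (hS e h1)
  simp [h0]

lemma lfun_eq_sum (hS : ∀ e, ℒ e ≠ 0 → e ∈ S) (u : ℝ) :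
    lfun ℒ u = ∑ e ∈ S, if u < e then ℒ e else 0 := by
  apply finsum_eq_sum_of_support_subset
  intro e he
  apply hS
  intro h0
  apply he
  simp [h0]

lemma sqrtabs_pfun (hS : ∀ e, ℒ e ≠ 0 → e ∈ S) (u : ℝ) :
    Real.sqrt |PfunR ℒ u| = ∏ e ∈ S, Real.sqrt |u - e| ^ ℒ e := by
  rw [pfun_eq_prod hS u, Finset.abs_prod,
    sqrt_finset_prod _ _ (fun e _ => abs_nonneg _)]
  apply Finset.prod_congr rfl
  intro e _
  rw [_root_.abs_pow, sqrt_pow' _ (abs_nonneg _)]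

lemma pfun_sign (hS : ∀ e, ℒ e ≠ 0 → e ∈ S) (u : ℝ) :
    PfunR ℒ u = (-1 : ℝ) ^ lfun ℒ u * |PfunR ℒ u| := by
  rw [pfun_eq_prod hS u, lfun_eq_sum hS u, Finset.abs_prod,
    ← Finset.prod_pow_eq_pow_sum, ← Finset.prod_mul_distrib]
  apply Finset.prod_congr rfl
  intro e _
  by_cases h : u < e
  · rw [if_pos h, _root_.abs_pow, _root_.abs_of_neg (by linarith : u - e < 0), ← mul_pow]
    congr 1
    ring
  · rw [if_neg h, pow_zero, one_mul, _root_.abs_pow,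
      _root_.abs_of_nonneg (by linarith [not_lt.1 h] : (0:ℝ) ≤ u - e)]

lemma qfun_sq (hS : ∀ e, ℒ e ≠ 0 → e ∈ S) (u : ℝ) :
    qfun ℒ u ^ 2 = ((PfunR ℒ u : ℝ) : ℂ) := by
  rw [qfun, mul_pow, pow_right_comm, Complex.I_sq, ← Complex.ofReal_pow,
    Real.sq_sqrt (abs_nonneg _)]
  conv_rhs => rw [pfun_sign hS u]
  push_cast
  ring

lemma listsum_mem (α β : ℝ) : ∀ L : List (Fin 2),
    ∃ s1 s2 : ℤ, (L.map (stepOf α β)).sum = s1 * α + s2 * β := by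
  intro L
  induction L with
  | nil => exact ⟨0, 0, by simp⟩
  | cons i L ih =>
    obtain ⟨s1, s2, hs⟩ := ih
    rcases fin2_cases i with rfl | rfl
    · refine ⟨s1 + 1, s2, ?_⟩
      rw [List.map_cons, List.sum_cons, hs]
      have : stepOf α β 0 = α := by simp [stepOf]
      rw [this]; push_cast; ring
    · refine ⟨s1, s2 + 1, ?_⟩
      rw [List.map_cons, List.sum_cons, hs]
      have : stepOf α β 1 = β := by simp [stepOf]
      rw [this]; push_cast; ring

lemma sigmaL_mem (α β : ℝ) (l : List (Fin 2)) (j : ℕ) :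
    ∃ s1 s2 : ℤ, sigmaL α β l j = s1 * α + s2 * β :=
  listsum_mem α β (l.take j)

lemma lfun_shift {ℒ : ℝ → ℕ} {S D : Finset ℝ} (hS : ∀ e, ℒ e ≠ 0 → e ∈ S)
    {c : ℝ} (hD : ∀ x, ℒ (x + c) ≠ 0 → x ∈ D) (μ : ℝ) :
    lfun ℒ (μ + c) = ∑ x ∈ D, if μ < x then ℒ (x + c) else 0 := by
  rw [lfun_eq_sum hS (μ + c)]
  have h := sum_shift (M := ℕ) (fun s k => if s < 0 then k else 0) (fun x => by
      by_cases h : x < (0:ℝ) <;> simp [h]) ℒ S D hS hD μ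
  calc ∑ e ∈ S, (if μ + c < e then ℒ e else 0)
      = ∑ e ∈ S, (if μ + c - e < 0 then ℒ e else 0) := by
        apply Finset.sum_congr rfl
        intro e _
        congr 1
        simp only [eq_iff_iff]
        constructor <;> intro <;> linarith
    _ = ∑ x ∈ D, (if μ - x < 0 then ℒ (x + c) else 0) := h
    _ = ∑ x ∈ D, (if μ < x then ℒ (x + c) else 0) := by
        apply Finset.sum_congr rfl
        intro x _
        congr 1
        simp only [eq_iff_iff]
        constructor <;> intro <;> linarith

lemma sqrtabs_shift {ℒ : ℝ → ℕ} {S D : Finset ℝ} (hS : ∀ e, ℒ e ≠ 0 → e ∈ S)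
    {c : ℝ} (hD : ∀ x, ℒ (x + c) ≠ 0 → x ∈ D) (μ : ℝ) :
    Real.sqrt |PfunR ℒ (μ + c)| = ∏ x ∈ D, Real.sqrt |μ - x| ^ ℒ (x + c) := by
  rw [sqrtabs_pfun hS (μ + c)]
  exact prod_shift (fun s k => Real.sqrt |s| ^ k) (fun x => pow_zero _) ℒ S D hS hD μ

lemma pfunC_shift {ℒ : ℝ → ℕ} {S D : Finset ℝ} (hS : ∀ e, ℒ e ≠ 0 → e ∈ S)
    {c : ℝ} (hD : ∀ x, ℒ (x + c) ≠ 0 → x ∈ D) (μ : ℝ) :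
    ((PfunR ℒ (μ + c) : ℝ) : ℂ) = ∏ x ∈ D, ((μ - x : ℝ) : ℂ) ^ ℒ (x + c) := by
  rw [pfun_eq_prod hS (μ + c), Complex.ofReal_prod]
  calc ∏ e ∈ S, (((μ + c - e) ^ ℒ e : ℝ) : ℂ)
      = ∏ e ∈ S, ((μ + c - e : ℝ) : ℂ) ^ ℒ e := by
        apply Finset.prod_congr rfl
        intro e _
        push_cast
        ring
    _ = ∏ x ∈ D, ((μ - x : ℝ) : ℂ) ^ ℒ (x + c) :=
        prod_shift (fun s k => ((s : ℝ) : ℂ) ^ k) (fun x => pow_zero _) ℒ S D hS hD μ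

lemma lfun_sum_swap {ι : Type*} (T : Finset ι) (P : ι → Prop) [DecidablePred P] (ℒ : ℝ → ℕ) (S D : Finset ℝ)
    (hS : ∀ e, ℒ e ≠ 0 → e ∈ S) (c : ι → ℝ)
    (hD : ∀ j ∈ T, ∀ x : ℝ, ℒ (x + c j) ≠ 0 → x ∈ D) (μ : ℝ) :
    ∑ j ∈ T, (if P j then lfun ℒ (μ + c j) else 0)
      = ∑ x ∈ D, (if μ < x then ∑ j ∈ T, (if P j then ℒ (x + c j) else 0) else 0) := by
  have step1 : ∑ j ∈ T, (if P j then lfun ℒ (μ + c j) else 0)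
      = ∑ j ∈ T, ∑ x ∈ D, (if P j then (if μ < x then ℒ (x + c j) else 0) else 0) := by
    apply Finset.sum_congr rfl
    intro j hj
    by_cases hP : P j
    · rw [if_pos hP, lfun_shift hS (hD j hj) μ]
      apply Finset.sum_congr rfl
      intro x _
      rw [if_pos hP]
    · rw [if_neg hP]
      rw [Finset.sum_congr rfl (fun x _ => if_neg hP), Finset.sum_const_zero]
  rw [step1, Finset.sum_comm]
  apply Finset.sum_congr rfl
  intro x _
  by_cases hx : μ < x
  · rw [if_pos hx]
    apply Finset.sum_congr rfl
    intro j _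
    by_cases hP : P j
    · rw [if_pos hP, if_pos hP, if_pos hx]
    · rw [if_neg hP, if_neg hP]
  · rw [if_neg hx]
    rw [Finset.sum_congr rfl (fun j _ => by
      by_cases hP : P j
      · rw [if_pos hP, if_neg hx]
      · rw [if_neg hP]), Finset.sum_const_zero]

lemma q_prod_swap {M : Type*} [CommMonoid M] {ι : Type*} (T : Finset ι) (P : ι → Prop) [DecidablePred P]
    (g : ℝ → M) (ℒ : ℝ → ℕ) (D : Finset ℝ) (c : ι → ℝ) (Q : ι → M)
    (hrep : ∀ j ∈ T, P j → Q j = ∏ x ∈ D, g x ^ ℒ (x + c j)) :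
    ∏ j ∈ T, (if P j then Q j else 1)
      = ∏ x ∈ D, g x ^ (∑ j ∈ T, if P j then ℒ (x + c j) else 0) := by
  have step1 : ∏ j ∈ T, (if P j then Q j else 1)
      = ∏ j ∈ T, ∏ x ∈ D, g x ^ (if P j then ℒ (x + c j) else 0) := by
    apply Finset.prod_congr rfl
    intro j hj
    by_cases hP : P j
    · rw [if_pos hP, hrep j hj hP]
      apply Finset.prod_congr rfl
      intro x _
      rw [if_pos hP]
    · rw [if_neg hP]
      rw [Finset.prod_congr rfl (fun x _ => by rw [if_neg hP, pow_zero]),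
        Finset.prod_const_one]
  rw [step1, Finset.prod_comm]
  apply Finset.prod_congr rfl
  intro x _
  rw [Finset.prod_pow_eq_pow_sum]

end Stmt17Aux

open Stmt17Aux

/-- For every `𝐢 ∈ Seq₂(m,n)` and `μ ∈ F`:
`∏_{j=1}^{ℓ} q_{i_j}(μ+σ_j+α_{i_j}/2) = ∏_{λ∈F} (μ−λ)^{ord(𝐢,λ)}`, the right-hand
product having only finitely many factors `≠ 1` since `ord(𝐢,·)` is nonzero at only
finitely many `λ ∈ F`. -/
theorem stmt17 (m n : ℕ) (hmn : Nat.Coprime m n) (α β : ℝ)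
    (hαβ : (α, β) ≠ ((0 : ℝ), (0 : ℝ))) (hlin : (m : ℝ) * α + (n : ℝ) * β = 0)
    (ℒ₁ ℒ₂ : ℝ → ℕ) (hconf : Config α β ℒ₁ ℒ₂)
    (l : List (Fin 2)) (hl0 : l.count 0 = m) (hl1 : l.count 1 = n) :
    {lam ∈ latF α β | ordL α β ℒ₁ l lam ≠ 0}.Finite ∧
    ∀ μ ∈ latF α β,
      (∏ j ∈ Finset.range l.length,
        qfun (if l.getD j 0 = 0 then ℒ₁ else ℒ₂)
          (μ + sigmaL α β l j + (if l.getD j 0 = 0 then α else β) / 2)) =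
      ∏ᶠ lam ∈ latF α β, ((μ - lam : ℝ) : ℂ) ^ ordL α β ℒ₁ l lam := by
  have hS1 : ∀ e, ℒ₁ e ≠ 0 → e ∈ hconf.fin1.toFinset :=
    fun e he => hconf.fin1.mem_toFinset.2 he
  have hS2 : ∀ e, ℒ₂ e ≠ 0 → e ∈ hconf.fin2.toFinset :=
    fun e he => hconf.fin2.mem_toFinset.2 he
  have hordsupp : ∀ lam : ℝ, ordL α β ℒ₁ l lam ≠ 0 →
      ∃ j ∈ Finset.range l.length, l.getD j 0 = 0 ∧ ℒ₁ (lam + sigmaL α β l j + α / 2) ≠ 0 := by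
    intro lam h
    rw [ordL] at h
    by_contra hno
    push_neg at hno
    apply h
    apply Finset.sum_eq_zero
    intro j hj
    by_cases hc : l.getD j 0 = 0
    · rw [if_pos hc]
      exact hno j hj hc
    · rw [if_neg hc]
  constructor
  · have hfin : (⋃ j ∈ (Finset.range l.length : Finset ℕ),
        (fun e => e - (sigmaL α β l j + α / 2)) '' Function.support ℒ₁).Finite :=
      Set.Finite.biUnion (Finset.range l.length).finite_toSet
        (fun j _ => hconf.fin1.image _)
    apply hfin.subset
    rintro lam ⟨_, hord⟩
    obtain ⟨j, hj, hc, hne⟩ := hordsupp lam hord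
    apply Set.mem_biUnion (Finset.mem_coe.2 hj)
    exact ⟨lam + sigmaL α β l j + α / 2, Function.mem_support.2 hne, by ring⟩
  · intro μ hμ
    set S₁ := hconf.fin1.toFinset with hS₁def
    set S₂ := hconf.fin2.toFinset with hS₂def
    set D : Finset ℝ := (Finset.range l.length).biUnion (fun j =>
      S₁.image (fun e => e - (sigmaL α β l j + α / 2))
        ∪ S₂.image (fun e => e - (sigmaL α β l j + β / 2))) with hDdef
    have hD1 : ∀ j ∈ Finset.range l.length, ∀ x : ℝ,
        ℒ₁ (x + (sigmaL α β l j + α / 2)) ≠ 0 → x ∈ D := by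
      intro j hj x hx
      apply Finset.mem_biUnion.2
      exact ⟨j, hj, Finset.mem_union_left _ (Finset.mem_image.2
        ⟨x + (sigmaL α β l j + α / 2), hS1 _ hx, by ring⟩)⟩
    have hD2 : ∀ j ∈ Finset.range l.length, ∀ x : ℝ,
        ℒ₂ (x + (sigmaL α β l j + β / 2)) ≠ 0 → x ∈ D := by
      intro j hj x hx
      apply Finset.mem_biUnion.2
      exact ⟨j, hj, Finset.mem_union_right _ (Finset.mem_image.2
        ⟨x + (sigmaL α β l j + β / 2), hS2 _ hx, by ring⟩)⟩
    have hC2 : ∀ x : ℝ,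
        (∑ j ∈ Finset.range l.length,
          if l.getD j 0 = 0 then ℒ₁ (x + (sigmaL α β l j + α / 2)) else 0)
        = ∑ j ∈ Finset.range l.length,
          if l.getD j 0 = 0 then 0 else ℒ₂ (x + (sigmaL α β l j + β / 2)) := by
      intro x
      have e1 : ∀ j : ℕ, x + (sigmaL α β l j + α / 2) = x + sigmaL α β l j + α / 2 :=
        fun j => by ring
      have e2 : ∀ j : ℕ, x + (sigmaL α β l j + β / 2) = x + sigmaL α β l j + β / 2 :=
        fun j => by ring
      simp only [e1, e2]
      exact C2 hαβ hlin hconf l hl0 hl1 x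
    have hC2' : ∀ x : ℝ,
        (∑ j ∈ Finset.range l.length,
          if l.getD j 0 = 0 then ℒ₁ (x + (sigmaL α β l j + α / 2)) else 0)
        = ∑ j ∈ Finset.range l.length,
          if ¬ l.getD j 0 = 0 then ℒ₂ (x + (sigmaL α β l j + β / 2)) else 0 := by
      intro x
      rw [hC2 x]
      apply Finset.sum_congr rfl
      intro j _
      by_cases hc : l.getD j 0 = 0 <;> simp [hc]
    -- phases
    have hA : (∑ j ∈ Finset.range l.length,
          if l.getD j 0 = 0 then lfun ℒ₁ (μ + (sigmaL α β l j + α / 2)) else 0)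
        = ∑ j ∈ Finset.range l.length,
          if l.getD j 0 = 0 then 0 else lfun ℒ₂ (μ + (sigmaL α β l j + β / 2)) := by
      have s1 : (∑ j ∈ Finset.range l.length,
            if l.getD j 0 = 0 then lfun ℒ₁ (μ + (sigmaL α β l j + α / 2)) else 0)
          = ∑ x ∈ D, (if μ < x then
              ∑ j ∈ Finset.range l.length,
                (if l.getD j 0 = 0 then ℒ₁ (x + (sigmaL α β l j + α / 2)) else 0) else 0) :=
        @lfun_sum_swap ℕ (Finset.range l.length) (fun j => l.getD j 0 = 0) (fun j => instDecidableEqFin 2 (l.getD j 0) 0) ℒ₁ S₁ D hS1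
          (fun j => sigmaL α β l j + α / 2) hD1 μ
      have s2 : (∑ j ∈ Finset.range l.length,
            if ¬ l.getD j 0 = 0 then lfun ℒ₂ (μ + (sigmaL α β l j + β / 2)) else 0)
          = ∑ x ∈ D, (if μ < x then
              ∑ j ∈ Finset.range l.length,
                (if ¬ l.getD j 0 = 0 then ℒ₂ (x + (sigmaL α β l j + β / 2)) else 0) else 0) :=
        @lfun_sum_swap ℕ (Finset.range l.length) (fun j => ¬ l.getD j 0 = 0) (fun j => @instDecidableNot _ (instDecidableEqFin 2 (l.getD j 0) 0)) ℒ₂ S₂ D hS2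
          (fun j => sigmaL α β l j + β / 2) hD2 μ
      rw [s1]
      have flip : (∑ j ∈ Finset.range l.length,
            if l.getD j 0 = 0 then 0 else lfun ℒ₂ (μ + (sigmaL α β l j + β / 2)))
          = ∑ j ∈ Finset.range l.length,
            if ¬ l.getD j 0 = 0 then lfun ℒ₂ (μ + (sigmaL α β l j + β / 2)) else 0 := by
        apply Finset.sum_congr rfl
        intro j _
        by_cases hc : l.getD j 0 = 0 <;> simp [hc]
      rw [flip, s2]
      apply Finset.sum_congr rfl
      intro x _
      by_cases hx : μ < x
      · rw [if_pos hx, if_pos hx, hC2' x]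
      · rw [if_neg hx, if_neg hx]
    -- moduli
    have hR : (∏ j ∈ Finset.range l.length,
          if l.getD j 0 = 0 then Real.sqrt |PfunR ℒ₁ (μ + (sigmaL α β l j + α / 2))| else 1)
        = ∏ j ∈ Finset.range l.length,
          if l.getD j 0 = 0 then 1 else Real.sqrt |PfunR ℒ₂ (μ + (sigmaL α β l j + β / 2))| := by
      have s1 : (∏ j ∈ Finset.range l.length,
            if l.getD j 0 = 0 then Real.sqrt |PfunR ℒ₁ (μ + (sigmaL α β l j + α / 2))| else 1)
          = ∏ x ∈ D, Real.sqrt |μ - x| ^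
              (∑ j ∈ Finset.range l.length,
                if l.getD j 0 = 0 then ℒ₁ (x + (sigmaL α β l j + α / 2)) else 0) :=
        @q_prod_swap ℝ _ ℕ (Finset.range l.length) (fun j => l.getD j 0 = 0) (fun j => instDecidableEqFin 2 (l.getD j 0) 0)
          (fun x => Real.sqrt |μ - x|) ℒ₁ D (fun j => sigmaL α β l j + α / 2) _
          (fun j hj _ => sqrtabs_shift hS1 (hD1 j hj) μ)
      have s2 : (∏ j ∈ Finset.range l.length,
            if ¬ l.getD j 0 = 0 then Real.sqrt |PfunR ℒ₂ (μ + (sigmaL α β l j + β / 2))| else 1)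
          = ∏ x ∈ D, Real.sqrt |μ - x| ^
              (∑ j ∈ Finset.range l.length,
                if ¬ l.getD j 0 = 0 then ℒ₂ (x + (sigmaL α β l j + β / 2)) else 0) :=
        @q_prod_swap ℝ _ ℕ (Finset.range l.length) (fun j => ¬ l.getD j 0 = 0) (fun j => @instDecidableNot _ (instDecidableEqFin 2 (l.getD j 0) 0))
          (fun x => Real.sqrt |μ - x|) ℒ₂ D (fun j => sigmaL α β l j + β / 2) _
          (fun j hj _ => sqrtabs_shift hS2 (hD2 j hj) μ)
      rw [s1]
      have flip : (∏ j ∈ Finset.range l.length,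
            if l.getD j 0 = 0 then 1 else Real.sqrt |PfunR ℒ₂ (μ + (sigmaL α β l j + β / 2))|)
          = ∏ j ∈ Finset.range l.length,
            if ¬ l.getD j 0 = 0 then Real.sqrt |PfunR ℒ₂ (μ + (sigmaL α β l j + β / 2))| else 1 := by
        apply Finset.prod_congr rfl
        intro j _
        by_cases hc : l.getD j 0 = 0 <;> simp [hc]
      rw [flip, s2]
      apply Finset.prod_congr rfl
      intro x _
      rw [hC2' x]
    -- right-hand side
    have hord0 : ∀ lam : ℝ, lam ∉ latF α β → ordL α β ℒ₁ l lam = 0 := by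
      intro lam hlam
      rw [ordL]
      apply Finset.sum_eq_zero
      intro j hj
      by_cases hc : l.getD j 0 = 0
      · rw [if_pos hc]
        by_contra hne
        obtain ⟨x, y, hxy⟩ := hconf.supp1 _ hne
        obtain ⟨s1, s2, hs⟩ := sigmaL_mem α β l j
        exact hlam ⟨x - s1, y - s2, by push_cast; linarith⟩
      · rw [if_neg hc]
    have hRHS : (∏ᶠ lam ∈ latF α β, ((μ - lam : ℝ) : ℂ) ^ ordL α β ℒ₁ l lam)
        = ∏ x ∈ D, ((μ - x : ℝ) : ℂ) ^ ordL α β ℒ₁ l x := by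
      rw [finprod_mem_def]
      have hind : ∀ lam : ℝ, Set.mulIndicator (latF α β)
          (fun lam => ((μ - lam : ℝ) : ℂ) ^ ordL α β ℒ₁ l lam) lam
          = ((μ - lam : ℝ) : ℂ) ^ ordL α β ℒ₁ l lam := by
        intro lam
        by_cases hl : lam ∈ latF α β
        · rw [Set.mulIndicator_of_mem hl]
        · rw [Set.mulIndicator_of_notMem hl, hord0 lam hl, pow_zero]
      rw [finprod_congr hind]
      apply finprod_eq_prod_of_mulSupport_subset
      intro x hx
      rw [Function.mem_mulSupport] at hx
      have hxne : ordL α β ℒ₁ l x ≠ 0 := by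
        intro h0
        apply hx
        rw [h0, pow_zero]
      obtain ⟨j, hj, hc, hne⟩ := hordsupp x hxne
      apply hD1 j hj x
      have e : x + (sigmaL α β l j + α / 2) = x + sigmaL α β l j + α / 2 := by ring
      rw [e]
      exact hne
    have hRHS2 : (∏ j ∈ Finset.range l.length,
          if l.getD j 0 = 0 then ((PfunR ℒ₁ (μ + (sigmaL α β l j + α / 2)) : ℝ) : ℂ) else 1)
        = ∏ x ∈ D, ((μ - x : ℝ) : ℂ) ^ ordL α β ℒ₁ l x := by
      have s1 : (∏ j ∈ Finset.range l.length,
            if l.getD j 0 = 0 then ((PfunR ℒ₁ (μ + (sigmaL α β l j + α / 2)) : ℝ) : ℂ) else 1)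
          = ∏ x ∈ D, ((μ - x : ℝ) : ℂ) ^
              (∑ j ∈ Finset.range l.length,
                if l.getD j 0 = 0 then ℒ₁ (x + (sigmaL α β l j + α / 2)) else 0) :=
        @q_prod_swap ℂ _ ℕ (Finset.range l.length) (fun j => l.getD j 0 = 0) (fun j => instDecidableEqFin 2 (l.getD j 0) 0)
          (fun x => ((μ - x : ℝ) : ℂ)) ℒ₁ D (fun j => sigmaL α β l j + α / 2) _
          (fun j hj _ => pfunC_shift hS1 (hD1 j hj) μ)
      rw [s1]
      apply Finset.prod_congr rfl
      intro x _
      congr 1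
      rw [ordL]
      apply Finset.sum_congr rfl
      intro j _
      by_cases hc : l.getD j 0 = 0
      · rw [if_pos hc, if_pos hc]
        congr 1
        ring
      · rw [if_neg hc, if_neg hc]
    -- assembling the left-hand side
    have hsplit : (∏ j ∈ Finset.range l.length,
        qfun (if l.getD j 0 = 0 then ℒ₁ else ℒ₂)
          (μ + sigmaL α β l j + (if l.getD j 0 = 0 then α else β) / 2))
        = (∏ j ∈ Finset.range l.length,
            (if l.getD j 0 = 0 then qfun ℒ₁ (μ + (sigmaL α β l j + α / 2)) else 1))
          * ∏ j ∈ Finset.range l.length,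
            (if l.getD j 0 = 0 then 1 else qfun ℒ₂ (μ + (sigmaL α β l j + β / 2))) := by
      rw [← Finset.prod_mul_distrib]
      apply Finset.prod_congr rfl
      intro j _
      by_cases hc : l.getD j 0 = 0
      · rw [if_pos hc, if_pos hc, if_pos hc, if_pos hc, mul_one]
        congr 1
        ring
      · rw [if_neg hc, if_neg hc, if_neg hc, if_neg hc, one_mul]
        congr 1
        ring
    have hQ1 : (∏ j ∈ Finset.range l.length,
          (if l.getD j 0 = 0 then qfun ℒ₁ (μ + (sigmaL α β l j + α / 2)) else 1))
        = Complex.I ^ (∑ j ∈ Finset.range l.length,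
            if l.getD j 0 = 0 then lfun ℒ₁ (μ + (sigmaL α β l j + α / 2)) else 0)
          * ((∏ j ∈ Finset.range l.length,
            (if l.getD j 0 = 0 then Real.sqrt |PfunR ℒ₁ (μ + (sigmaL α β l j + α / 2))| else 1) : ℝ) : ℂ) := by
      rw [Complex.ofReal_prod, ← Finset.prod_pow_eq_pow_sum, ← Finset.prod_mul_distrib]
      apply Finset.prod_congr rfl
      intro j _
      by_cases hc : l.getD j 0 = 0
      · rw [if_pos hc, if_pos hc, if_pos hc, qfun]
      · rw [if_neg hc, if_neg hc, if_neg hc, pow_zero, Complex.ofReal_one, mul_one]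
    have hQ2 : (∏ j ∈ Finset.range l.length,
          (if l.getD j 0 = 0 then 1 else qfun ℒ₂ (μ + (sigmaL α β l j + β / 2))))
        = Complex.I ^ (∑ j ∈ Finset.range l.length,
            if l.getD j 0 = 0 then 0 else lfun ℒ₂ (μ + (sigmaL α β l j + β / 2)))
          * ((∏ j ∈ Finset.range l.length,
            (if l.getD j 0 = 0 then 1 else Real.sqrt |PfunR ℒ₂ (μ + (sigmaL α β l j + β / 2))|) : ℝ) : ℂ) := by
      rw [Complex.ofReal_prod, ← Finset.prod_pow_eq_pow_sum, ← Finset.prod_mul_distrib]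
      apply Finset.prod_congr rfl
      intro j _
      by_cases hc : l.getD j 0 = 0
      · rw [if_pos hc, if_pos hc, if_pos hc, pow_zero, Complex.ofReal_one, one_mul]
      · rw [if_neg hc, if_neg hc, if_neg hc, qfun]
    have hQQ : (∏ j ∈ Finset.range l.length,
          (if l.getD j 0 = 0 then 1 else qfun ℒ₂ (μ + (sigmaL α β l j + β / 2))))
        = ∏ j ∈ Finset.range l.length,
          (if l.getD j 0 = 0 then qfun ℒ₁ (μ + (sigmaL α β l j + α / 2)) else 1) := by
      rw [hQ1, hQ2, hA, hR]
    have hfinal : (∏ j ∈ Finset.range l.length,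
          (if l.getD j 0 = 0 then qfun ℒ₁ (μ + (sigmaL α β l j + α / 2)) else 1) ^ 2)
        = ∏ j ∈ Finset.range l.length,
          (if l.getD j 0 = 0 then ((PfunR ℒ₁ (μ + (sigmaL α β l j + α / 2)) : ℝ) : ℂ) else 1) := by
      apply Finset.prod_congr rfl
      intro j _
      by_cases hc : l.getD j 0 = 0
      · rw [if_pos hc, if_pos hc, qfun_sq hS1]
      · rw [if_neg hc, if_neg hc, one_pow]
    rw [hsplit, hQQ, ← sq, ← Finset.prod_pow, hfinal, hRHS2, hRHS]

end
end
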